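/- arXiv:1012.0545 — 4 statements merged into one kernel-verified Lean document; each statement's English description precedes it below -/
import Mathlib

section
/- The functions 1, cos t, sin t, and sin(2t)·(2 − a₁·cos t − a₂·sin t) on ℝ are linearly independent over ℝ, for any real constants a₁, a₂ with a₁² + a₂² < 1. -/
open Real

theorem stmt_0 (a₁ a₂ : ℝ) (h : a₁ ^ 2 + a₂ ^ 2 < 1) :
    LinearIndependent ℝ
      ![(fun _ : ℝ => (1 : ℝ)),
        (fun t : ℝ => Real.cos t),
        (fun t : ℝ => Real.sin t),
        (fun t : ℝ => Real.sin (2 * t) * (2 - a₁ * Real.cos t - a₂ * Real.sin t))] := by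
  rw [Fintype.linearIndependent_iff]
  intro g hg
  have H : ∀ t : ℝ, g 0 * 1 + g 1 * Real.cos t + g 2 * Real.sin t
      + g 3 * (Real.sin (2 * t) * (2 - a₁ * Real.cos t - a₂ * Real.sin t)) = 0 := by
    intro t
    have := congrFun hg t
    simpa [Fin.sum_univ_four, mul_comm] using this
  have h0 := H 0
  have hpi := H Real.pi
  have hpi2 := H (Real.pi / 2)
  have hnpi2 := H (-(Real.pi / 2))
  have hpi4 := H (Real.pi / 4)
  simp [Real.sin_two_pi, mul_comm (2:ℝ)] at h0 hpi hpi2 hnpi2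
  rw [show (2 : ℝ) * (Real.pi / 4) = Real.pi / 2 by ring, Real.sin_pi_div_two,
    Real.cos_pi_div_four, Real.sin_pi_div_four] at hpi4
  have hg0 : g 0 = 0 := by linarith
  have hg1 : g 1 = 0 := by linarith
  have hg2 : g 2 = 0 := by linarith
  have hs : Real.sqrt 2 ^ 2 = 2 := Real.sq_sqrt (by norm_num)
  have hfac : 2 - a₁ * (Real.sqrt 2 / 2) - a₂ * (Real.sqrt 2 / 2) > 0 := by
    nlinarith [sq_nonneg (a₁ + a₂ - Real.sqrt 2), sq_nonneg (a₁ - a₂), Real.sqrt_nonneg 2]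
  have hg3 : g 3 = 0 := by
    rw [hg0, hg1, hg2] at hpi4
    have : g 3 * (1 * (2 - a₁ * (Real.sqrt 2 / 2) - a₂ * (Real.sqrt 2 / 2))) = 0 := by
      linarith
    rcases mul_eq_zero.mp this with h' | h'
    · exact h'
    · nlinarith
  intro i
  fin_cases i <;> assumption
end

section
/- The Lie subalgebra of vector fields on the circle generated (under the bracket [f, g] = f g' − f' g) by the three vector fields ∂ₜ, cos t·∂ₜ, and sin t·∂ₜ, together with cos 2t·∂ₜ and sin 2t·∂ₜ, contains cos(nt)·∂ₜ and sin(nt)·∂ₜ for every natural number n. -/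
private lemma dcos (c : ℝ) : deriv (fun t : ℝ => Real.cos (c * t)) = fun t => -c * Real.sin (c * t) := by
  funext t
  have h : HasDerivAt (fun t : ℝ => Real.cos (c * t)) (-Real.sin (c * t) * c) t := by
    simpa using ((hasDerivAt_id t).const_mul c).cos
  rw [h.deriv]; ring

private lemma dsin (c : ℝ) : deriv (fun t : ℝ => Real.sin (c * t)) = fun t => c * Real.cos (c * t) := by
  funext t
  have h : HasDerivAt (fun t : ℝ => Real.sin (c * t)) (Real.cos (c * t) * c) t := by
    simpa using ((hasDerivAt_id t).const_mul c).sin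
  rw [h.deriv]; ring

theorem stmt_4 (W : Submodule ℝ (ℝ → ℝ))
    (hbr : ∀ f ∈ W, ∀ g ∈ W, (fun t : ℝ => f t * deriv g t - deriv f t * g t) ∈ W)
    (h0 : (fun _ : ℝ => (1 : ℝ)) ∈ W)
    (hc : (fun t : ℝ => Real.cos t) ∈ W)
    (hs : (fun t : ℝ => Real.sin t) ∈ W)
    (hc2 : (fun t : ℝ => Real.cos (2 * t)) ∈ W)
    (hs2 : (fun t : ℝ => Real.sin (2 * t)) ∈ W) :
    ∀ n : ℕ, (fun t : ℝ => Real.cos (n * t)) ∈ W ∧ (fun t : ℝ => Real.sin (n * t)) ∈ W := by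
  intro n
  induction n with
  | zero => simpa using ⟨h0, W.zero_mem⟩
  | succ k ih =>
    match k, ih with
    | 0, _ => simpa using ⟨hc, hs⟩
    | 1, _ => exact ⟨by push_cast; exact hc2, by push_cast; exact hs2⟩
    | (m+2), ih =>
      obtain ⟨hck, hsk⟩ := ih
      set c : ℝ := ((m:ℝ)+2) with hcdef
      have hck' : (fun t : ℝ => Real.cos (c * t)) ∈ W := by
        convert hck using 2; push_cast [hcdef]; ring
      have hsk' : (fun t : ℝ => Real.sin (c * t)) ∈ W := by
        convert hsk using 2; push_cast [hcdef]; ring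
      have hc1 : c - 1 ≠ 0 := by have : (0:ℝ) ≤ (m:ℝ) := Nat.cast_nonneg m; intro h; rw [hcdef] at h; linarith
      have hF := hbr _ hc _ hck'
      have hG := hbr _ hs _ hsk'
      have hP := hbr _ hc _ hsk'
      have hQ := hbr _ hs _ hck'
      simp only [dcos, dsin, Real.deriv_cos, Real.deriv_sin, Real.deriv_cos'] at hF hG hP hQ
      constructor
      · -- cos((m+3) t) = (1/(c-1)) • (P + Q)
        have hmem := W.smul_mem (1/(c-1)) (W.add_mem hP hQ)
        convert hmem using 1
        funext t
        simp only [Pi.smul_apply, Pi.add_apply, smul_eq_mul]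
        have : Real.cos (((m:ℝ)+2+1) * t) = Real.cos t * Real.cos (c * t) - Real.sin t * Real.sin (c * t) := by
          rw [← Real.cos_add, hcdef]; ring_nf
        push_cast
        rw [this]
        field_simp
        ring
      · -- sin((m+3) t) = (1/(1-c)) • (F - G)
        have hmem := W.smul_mem (1/(1-c)) (W.sub_mem hF hG)
        convert hmem using 1
        funext t
        simp only [Pi.smul_apply, Pi.sub_apply, smul_eq_mul]
        have : Real.sin (((m:ℝ)+2+1) * t) = Real.sin t * Real.cos (c * t) + Real.cos t * Real.sin (c * t) := by
          rw [← Real.sin_add, hcdef]; ring_nf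
        push_cast
        rw [this]
        have h1c : 1 - c ≠ 0 := by intro h; apply hc1; linarith
        field_simp
        ring
end

section
/- Writing cos t = y¹/|y|, sin t = y²/|y|, the four functions of t given by 1, (cos t − a¹), (sin t − a²), and cos t·sin t·(1 − a¹cos t − a²sin t) + (cos t − a¹)(sin t − a²) are linearly independent over ℝ, for any a = (a¹,a²) ∈ ℝ² with |a| < 1. -/
theorem stmt_8 (a : ℝ × ℝ) (ha : Real.sqrt (a.1 ^ 2 + a.2 ^ 2) < 1) :
    LinearIndependent ℝ
      ![(fun _ : ℝ => (1 : ℝ)),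
        (fun t : ℝ => Real.cos t - a.1),
        (fun t : ℝ => Real.sin t - a.2),
        (fun t : ℝ => Real.cos t * Real.sin t * (1 - a.1 * Real.cos t - a.2 * Real.sin t)
          + (Real.cos t - a.1) * (Real.sin t - a.2))] := by
  have ha2 : a.1 ^ 2 + a.2 ^ 2 < 1 := by
    nlinarith [Real.sq_sqrt (show (0:ℝ) ≤ a.1 ^ 2 + a.2 ^ 2 by positivity),
      Real.sqrt_nonneg (a.1 ^ 2 + a.2 ^ 2)]
  rw [Fintype.linearIndependent_iff]
  intro g hg
  have h : ∀ t : ℝ, g 0 + g 1 * (Real.cos t - a.1) + g 2 * (Real.sin t - a.2)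
      + g 3 * (Real.cos t * Real.sin t * (1 - a.1 * Real.cos t - a.2 * Real.sin t)
          + (Real.cos t - a.1) * (Real.sin t - a.2)) = 0 := by
    intro t
    have := congrFun hg t
    simp [Fin.sum_univ_four] at this
    linarith [this]
  have h0 := h 0
  have hpi := h Real.pi
  have hp2 := h (Real.pi / 2)
  have hm2 := h (-(Real.pi / 2))
  have hp4 := h (Real.pi / 4)
  simp [Real.cos_pi_div_four, Real.sin_pi_div_four] at h0 hpi hp2 hm2 hp4
  have hs : Real.sqrt 2 * Real.sqrt 2 = 2 := Real.mul_self_sqrt (by norm_num)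
  have h1 : g 1 = a.2 * g 3 := by linear_combination (h0 - hpi) / 2
  have h2 : g 2 = a.1 * g 3 := by linear_combination (hp2 - hm2) / 2
  have hg0 : g 0 = a.1 * a.2 * g 3 := by
    linear_combination (h0 + hpi) / 2 + a.1 * h1 + a.2 * h2
  have hkey : g 3 * (4 - (a.1 + a.2) * Real.sqrt 2) = 0 := by
    linear_combination 4 * hp4 - 4 * hg0 - 4 * (Real.sqrt 2 / 2 - a.1) * h1
      - 4 * (Real.sqrt 2 / 2 - a.2) * h2
      + ((a.1 + a.2) * Real.sqrt 2 * g 3 / 2 - 2 * g 3) * hs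
  have hpos : 4 - (a.1 + a.2) * Real.sqrt 2 > 0 := by
    nlinarith [sq_nonneg (a.1 + a.2 - Real.sqrt 2), hs, ha2, Real.sqrt_nonneg 2]
  have hg3 : g 3 = 0 := by
    rcases mul_eq_zero.mp hkey with h' | h'
    · exact h'
    · linarith
  intro i
  fin_cases i <;> simp [hg0, h1, h2, hg3]
end

section
/- Let V be the real span of the rotation field and its scaled versions: the vector fields on ℝ²\{0} given in polar coordinates by ∂ₜ, cos t·∂ₜ, sin t·∂ₜ, (4cos²t+1)·∂ₜ, (4sin²t+1)·∂ₜ, cos t sin t·∂ₜ. The Lie algebra generated by V under [f,g] = fg' − f'g is dense in the space of all smooth vector fields on S¹ with respect to uniform convergence of all derivatives (equivalently, it contains all trigonometric polynomial vector fields). -/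
private lemma deriv_cos_mul (a : ℝ) :
    deriv (fun t : ℝ => Real.cos (a * t)) = fun t => -(a * Real.sin (a * t)) := by
  funext x
  have h : HasDerivAt (fun t : ℝ => Real.cos (a * t)) (-Real.sin (a * x) * a) x := by
    simpa using ((hasDerivAt_id x).const_mul a).cos
  rw [h.deriv]; ring

private lemma deriv_cos' : deriv (fun t : ℝ => Real.cos t) = fun t => -Real.sin t := by
  funext x; simp

private lemma deriv_sin' : deriv (fun t : ℝ => Real.sin t) = fun t => Real.cos t := by
  funext x; simp

private lemma step (W : Submodule ℝ (ℝ → ℝ))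
    (hbr : ∀ f ∈ W, ∀ g ∈ W, (fun t : ℝ => f t * deriv g t - deriv f t * g t) ∈ W)
    (hc : (fun t : ℝ => Real.cos t) ∈ W)
    (hs : (fun t : ℝ => Real.sin t) ∈ W)
    (a : ℝ) (ha : a ≠ 1)
    (hcp : (fun t : ℝ => Real.cos ((a - 1) * t)) ∈ W)
    (hsp : (fun t : ℝ => Real.sin ((a - 1) * t)) ∈ W)
    (hca : (fun t : ℝ => Real.cos (a * t)) ∈ W)
    (hsa : (fun t : ℝ => Real.sin (a * t)) ∈ W) :
    (fun t : ℝ => Real.cos ((a + 1) * t)) ∈ W ∧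
    (fun t : ℝ => Real.sin ((a + 1) * t)) ∈ W := by
  have ha' : (1 - a) / 2 ≠ 0 := by
    intro h; apply ha; linarith [ (div_eq_zero_iff.mp h).resolve_right (by norm_num) ]
  have ha'' : (a - 1) / 2 ≠ 0 := by
    intro h; apply ha; linarith [ (div_eq_zero_iff.mp h).resolve_right (by norm_num) ]
  constructor
  · -- cos ((a+1) t)
    have hb := hbr _ hs _ hca
    have key : (fun t : ℝ => ((a - 1) / 2) * Real.cos ((a + 1) * t)) ∈ W := by
      have heq : (fun t : ℝ => ((a - 1) / 2) * Real.cos ((a + 1) * t)) =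
          (fun t : ℝ => Real.sin t * deriv (fun t : ℝ => Real.cos (a * t)) t -
            deriv (fun t : ℝ => Real.sin t) t * Real.cos (a * t))
          + ((a + 1) / 2) • (fun t : ℝ => Real.cos ((a - 1) * t)) := by
        funext t
        simp only [deriv_cos_mul, deriv_sin', Pi.add_apply, Pi.smul_apply, smul_eq_mul]
        have e1 : (a + 1) * t = a * t + t := by ring
        have e2 : (a - 1) * t = a * t - t := by ring
        rw [e1, e2, Real.cos_add, Real.cos_sub]; ring
      rw [heq]
      exact W.add_mem hb (W.smul_mem _ hcp)
    have := W.smul_mem (((a - 1) / 2)⁻¹) key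
    have heq2 : ((a - 1) / 2)⁻¹ • (fun t : ℝ => ((a - 1) / 2) * Real.cos ((a + 1) * t)) =
        (fun t : ℝ => Real.cos ((a + 1) * t)) := by
      funext t
      simp only [Pi.smul_apply, smul_eq_mul]
      rw [← mul_assoc, inv_mul_cancel₀ ha'', one_mul]
    rwa [heq2] at this
  · -- sin ((a+1) t)
    have hb := hbr _ hc _ hca
    have key : (fun t : ℝ => ((1 - a) / 2) * Real.sin ((a + 1) * t)) ∈ W := by
      have heq : (fun t : ℝ => ((1 - a) / 2) * Real.sin ((a + 1) * t)) =
          (fun t : ℝ => Real.cos t * deriv (fun t : ℝ => Real.cos (a * t)) t -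
            deriv (fun t : ℝ => Real.cos t) t * Real.cos (a * t))
          + ((a + 1) / 2) • (fun t : ℝ => Real.sin ((a - 1) * t)) := by
        funext t
        simp only [deriv_cos_mul, deriv_cos', Pi.add_apply, Pi.smul_apply, smul_eq_mul]
        have e1 : (a + 1) * t = a * t + t := by ring
        have e2 : (a - 1) * t = a * t - t := by ring
        rw [e1, e2, Real.sin_add, Real.sin_sub]; ring
      rw [heq]
      exact W.add_mem hb (W.smul_mem _ hsp)
    have := W.smul_mem (((1 - a) / 2)⁻¹) key
    have heq2 : ((1 - a) / 2)⁻¹ • (fun t : ℝ => ((1 - a) / 2) * Real.sin ((a + 1) * t)) =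
        (fun t : ℝ => Real.sin ((a + 1) * t)) := by
      funext t
      simp only [Pi.smul_apply, smul_eq_mul]
      rw [← mul_assoc, inv_mul_cancel₀ ha', one_mul]
    rwa [heq2] at this

/-- The Lie algebra of vector fields on the circle generated by
`∂ₜ, cos t·∂ₜ, sin t·∂ₜ, (4cos²t+1)·∂ₜ, (4sin²t+1)·∂ₜ, cos t sin t·∂ₜ`
contains every trigonometric polynomial vector field `cos(nt)·∂ₜ`, `sin(nt)·∂ₜ`
(and hence is dense in the smooth vector fields on `S¹`). -/
theorem stmt_16 (W : Submodule ℝ (ℝ → ℝ))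
    (hbr : ∀ f ∈ W, ∀ g ∈ W, (fun t : ℝ => f t * deriv g t - deriv f t * g t) ∈ W)
    (h1 : (fun _ : ℝ => (1 : ℝ)) ∈ W)
    (hc : (fun t : ℝ => Real.cos t) ∈ W)
    (hs : (fun t : ℝ => Real.sin t) ∈ W)
    (hc2 : (fun t : ℝ => 4 * Real.cos t ^ 2 + 1) ∈ W)
    (hs2 : (fun t : ℝ => 4 * Real.sin t ^ 2 + 1) ∈ W)
    (hcs : (fun t : ℝ => Real.cos t * Real.sin t) ∈ W) :
    ∀ n : ℕ, (fun t : ℝ => Real.cos (n * t)) ∈ W ∧ (fun t : ℝ => Real.sin (n * t)) ∈ W := by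
  -- frequency 0
  have P0c : (fun t : ℝ => Real.cos ((0 : ℝ) * t)) ∈ W := by
    simpa using h1
  have P0s : (fun t : ℝ => Real.sin ((0 : ℝ) * t)) ∈ W := by
    simp only [zero_mul, Real.sin_zero]
    exact W.zero_mem
  -- frequency 1
  have P1c : (fun t : ℝ => Real.cos ((1 : ℝ) * t)) ∈ W := by simpa using hc
  have P1s : (fun t : ℝ => Real.sin ((1 : ℝ) * t)) ∈ W := by simpa using hs
  -- frequency 2
  have P2c : (fun t : ℝ => Real.cos ((2 : ℝ) * t)) ∈ W := by
    have h := W.smul_mem ((1 : ℝ)/4) (W.sub_mem hc2 hs2)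
    have heq : ((1 : ℝ)/4) • ((fun t : ℝ => 4 * Real.cos t ^ 2 + 1) -
        (fun t : ℝ => 4 * Real.sin t ^ 2 + 1)) = (fun t : ℝ => Real.cos ((2:ℝ) * t)) := by
      funext t
      simp only [Pi.smul_apply, Pi.sub_apply, smul_eq_mul]
      rw [show (2:ℝ) * t = t + t by ring, Real.cos_add]
      ring
    rwa [heq] at h
  have P2s : (fun t : ℝ => Real.sin ((2 : ℝ) * t)) ∈ W := by
    have h := W.smul_mem (2 : ℝ) hcs
    have heq : (2 : ℝ) • (fun t : ℝ => Real.cos t * Real.sin t) =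
        (fun t : ℝ => Real.sin ((2:ℝ) * t)) := by
      funext t
      simp only [Pi.smul_apply, smul_eq_mul]
      rw [show (2:ℝ) * t = t + t by ring, Real.sin_add]
      ring
    rwa [heq] at h
  -- strengthened induction
  have main : ∀ n : ℕ,
      ((fun t : ℝ => Real.cos ((n : ℝ) * t)) ∈ W ∧ (fun t : ℝ => Real.sin ((n : ℝ) * t)) ∈ W) ∧
      ((fun t : ℝ => Real.cos (((n : ℝ) + 1) * t)) ∈ W ∧
        (fun t : ℝ => Real.sin (((n : ℝ) + 1) * t)) ∈ W) ∧
      ((fun t : ℝ => Real.cos (((n : ℝ) + 2) * t)) ∈ W ∧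
        (fun t : ℝ => Real.sin (((n : ℝ) + 2) * t)) ∈ W) := by
    intro n
    induction n with
    | zero =>
      refine ⟨⟨by simpa using P0c, by simpa using P0s⟩,
        ⟨by simpa using P1c, by simpa using P1s⟩,
        ⟨by simpa using P2c, by simpa using P2s⟩⟩
    | succ n ih =>
      obtain ⟨_, h1', h2'⟩ := ih
      have ha : ((n : ℝ) + 2) ≠ 1 := by
        have : (0:ℝ) ≤ (n:ℝ) := Nat.cast_nonneg n
        intro h; linarith
      have hcp : (fun t : ℝ => Real.cos (((n : ℝ) + 2 - 1) * t)) ∈ W := by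
        rw [show ((n:ℝ) + 2 - 1) = (n:ℝ) + 1 from by ring]; exact h1'.1
      have hsp : (fun t : ℝ => Real.sin (((n : ℝ) + 2 - 1) * t)) ∈ W := by
        rw [show ((n:ℝ) + 2 - 1) = (n:ℝ) + 1 from by ring]; exact h1'.2
      have hst := step W hbr hc hs ((n : ℝ) + 2) ha hcp hsp h2'.1 h2'.2
      have memcast : ∀ f g : ℝ → ℝ, f = g → f ∈ W → g ∈ W := fun f g h hf => h ▸ hf
      refine ⟨⟨?_, ?_⟩, ⟨?_, ?_⟩, ⟨?_, ?_⟩⟩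
      · exact memcast _ _ (by funext t; congr 1; push_cast; ring) h1'.1
      · exact memcast _ _ (by funext t; congr 1; push_cast; ring) h1'.2
      · exact memcast _ _ (by funext t; congr 1; push_cast; ring) h2'.1
      · exact memcast _ _ (by funext t; congr 1; push_cast; ring) h2'.2
      · exact memcast _ _ (by funext t; congr 1; push_cast; ring) hst.1
      · exact memcast _ _ (by funext t; congr 1; push_cast; ring) hst.2
  intro n
  exact (main n).1
end
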